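/- arXiv:2406.19305 — 2 statements merged into one kernel-verified Lean document; each statement's English description precedes it below -/
import Mathlib

section
/- Let ι be a nonempty finite index set, let f, c, S, w : ι → ℝ, and let ε > 0. Assume that f(i) > 0 for all i, and that for every i: if w(i) ≥ 0 then c(i)·S(i) ≥ f(i) + ε, while if w(i) < 0 then S(i) = 0. Set ξ = min(ε, min_i f(i)), which is positive. Then Σ_i (f(i) − c(i)·S(i))·w(i) ≤ −ξ · Σ_i |w(i)|. -/
/-- Negative-drift estimate: if every movement with nonnegative weight is served
with margin `ε` above its demand and movements with negative weight receive no
service, then the drift `Σ (f i − c i · S i) · w i` is bounded above by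
`−ξ · Σ |w i|` where `ξ = min ε (min_i f i) > 0`. -/
theorem stmt8 {ι : Type*} [Fintype ι] [Nonempty ι]
    (f c S w : ι → ℝ) (ε : ℝ) (hε : 0 < ε) (hf : ∀ i, 0 < f i)
    (hserve : ∀ i, 0 ≤ w i → f i + ε ≤ c i * S i)
    (hzero : ∀ i, w i < 0 → S i = 0) :
    0 < min ε (Finset.univ.inf' Finset.univ_nonempty f) ∧
      ∑ i, (f i - c i * S i) * w i ≤
        -(min ε (Finset.univ.inf' Finset.univ_nonempty f)) * ∑ i, |w i| := by
  set ξ := min ε (Finset.univ.inf' Finset.univ_nonempty f) with hξ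
  have hξpos : 0 < ξ := by
    apply lt_min hε
    exact (Finset.lt_inf'_iff _).2 fun i _ => hf i
  refine ⟨hξpos, ?_⟩
  rw [neg_mul, Finset.mul_sum, ← Finset.sum_neg_distrib]
  apply Finset.sum_le_sum
  intro i _
  rcases lt_or_ge (w i) 0 with hw | hw
  · have hS := hzero i hw
    have habs : |w i| = -w i := abs_of_neg hw
    have hξf : ξ ≤ f i := le_trans (min_le_right _ _)
      (Finset.inf'_le _ (Finset.mem_univ i))
    rw [hS, mul_zero, sub_zero, habs]
    nlinarith
  · have h := hserve i hw
    have habs : |w i| = w i := abs_of_nonneg hw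
    have hξε : ξ ≤ ε := min_le_left _ _
    rw [habs]
    nlinarith
end

section
/- Let (Ω, F, μ) be a probability space, let C : Ω → ℝ be measurable with 0 ≤ C(ω) ≤ C_max for μ-almost every ω, where C_max ≥ 0. Let x ≥ 0 and B ≥ 0 be reals and let w be a real number with |w| ≤ x + B. Then (∫ C dμ − ∫ min(C(ω), x) dμ) · w ≤ C_max · (C_max + B). -/
open MeasureTheory

/-- Quantitative form of the paper's Lemma 1: the product of the mean service gap
with a weight `w` satisfying `|w| ≤ x + B` is uniformly bounded by
`C_max · (C_max + B)`. -/
theorem stmt10 {Ω : Type*} [MeasurableSpace Ω] (μ : Measure Ω)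
    [IsProbabilityMeasure μ] (C : Ω → ℝ) (hC : Measurable C)
    (C_max : ℝ) (hCmax : 0 ≤ C_max)
    (hbdd : ∀ᵐ ω ∂μ, 0 ≤ C ω ∧ C ω ≤ C_max)
    (x B w : ℝ) (hx : 0 ≤ x) (hB : 0 ≤ B) (hw : |w| ≤ x + B) :
    ((∫ ω, C ω ∂μ) - ∫ ω, min (C ω) x ∂μ) * w ≤ C_max * (C_max + B) := by
  have hCint : Integrable C μ := by
    apply Integrable.mono' (integrable_const C_max) hC.aestronglyMeasurable
    filter_upwards [hbdd] with ω ⟨h0, h1⟩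
    rwa [Real.norm_eq_abs, abs_of_nonneg h0]
  have hmin_int : Integrable (fun ω => min (C ω) x) μ := by
    apply Integrable.mono' hCint (hC.min measurable_const).aestronglyMeasurable
    filter_upwards [hbdd] with ω ⟨h0, h1⟩
    rw [Real.norm_eq_abs, abs_of_nonneg (le_min h0 hx)]
    exact min_le_left _ _
  rcases le_or_gt C_max x with hcx | hxc
  · -- min (C ω) x = C ω a.e.
    have : (∫ ω, min (C ω) x ∂μ) = ∫ ω, C ω ∂μ := by
      apply integral_congr_ae
      filter_upwards [hbdd] with ω ⟨h0, h1⟩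
      exact min_eq_left (h1.trans hcx)
    rw [this, sub_self, zero_mul]
    positivity
  · have h1 : (∫ ω, C ω ∂μ) ≤ C_max := by
      calc (∫ ω, C ω ∂μ) ≤ ∫ _, C_max ∂μ := by
            apply integral_mono_ae hCint (integrable_const C_max)
            filter_upwards [hbdd] with ω ⟨_, h⟩ using h
        _ = C_max := by simp
    have h2 : (0:ℝ) ≤ ∫ ω, min (C ω) x ∂μ := by
      apply integral_nonneg_of_ae
      filter_upwards [hbdd] with ω ⟨h0, _⟩ using le_min h0 hx
    have h3 : (∫ ω, min (C ω) x ∂μ) ≤ ∫ ω, C ω ∂μ := by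
      apply integral_mono_ae hmin_int hCint
      filter_upwards with ω using min_le_left _ _
    have hgap : (0:ℝ) ≤ (∫ ω, C ω ∂μ) - ∫ ω, min (C ω) x ∂μ := by linarith
    calc ((∫ ω, C ω ∂μ) - ∫ ω, min (C ω) x ∂μ) * w
        ≤ ((∫ ω, C ω ∂μ) - ∫ ω, min (C ω) x ∂μ) * |w| :=
          mul_le_mul_of_nonneg_left (le_abs_self w) hgap
      _ ≤ C_max * (C_max + B) := by
          apply mul_le_mul (by linarith) (by linarith) (abs_nonneg w) hCmax
end
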